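/- Let p ≥ 2 be real and q = p/(p-1). For every t > 0, one has sin((p-1)·Arg(1 - e^{iπ/q} t)) < 0. -/

import Mathlib

open Complex

theorem stmt_11 (p : ℝ) (hp : 2 ≤ p) (q : ℝ) (hq : q = p / (p - 1)) :
    ∀ t : ℝ, 0 < t →
      Real.sin ((p - 1) * Complex.arg (1 - Complex.exp (Real.pi / q * I) * t)) < 0 := by
  intro t ht
  have hp1 : (0:ℝ) < p - 1 := by linarith
  have hp0 : (0:ℝ) < p := by linarith
  have hq1 : 1 < q := by
    rw [hq, lt_div_iff₀ hp1]; linarith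
  have hq2 : q ≤ 2 := by
    rw [hq, div_le_iff₀ hp1]; linarith
  set θ : ℝ := Real.pi / q with hθdef
  have hπ := Real.pi_pos
  have hθpos : 0 < θ := div_pos hπ (by linarith)
  have hθlt : θ < Real.pi := by
    rw [hθdef, div_lt_iff₀ (by linarith : (0:ℝ) < q)]
    nlinarith
  have hθge : Real.pi / 2 ≤ θ := by
    rw [hθdef]
    exact div_le_div_of_nonneg_left hπ.le (by linarith) hq2
  have hcos : Real.cos θ ≤ 0 :=
    Real.cos_nonpos_of_pi_div_two_le_of_le hθge (by linarith)
  have hsin : 0 < Real.sin θ := Real.sin_pos_of_pos_of_lt_pi hθpos hθlt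
  have hθeq : p * θ = (p - 1) * Real.pi := by
    rw [hθdef, hq]
    field_simp
  set z : ℂ := 1 - Complex.exp (Real.pi / q * I) * t with hz
  have hexp : Complex.exp (Real.pi / q * I) =
      (Real.cos θ : ℂ) + (Real.sin θ : ℂ) * I := by
    have h : ((Real.pi : ℂ) / (q : ℂ)) = ((θ : ℝ) : ℂ) := by
      rw [hθdef]; push_cast; ring
    rw [h, Complex.exp_mul_I, ← Complex.ofReal_cos, ← Complex.ofReal_sin]
  have hre : z.re = 1 - Real.cos θ * t := by
    simp [hz, hexp, Complex.sub_re, Complex.add_re, Complex.mul_re,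
      Complex.cos_ofReal_re, Complex.sin_ofReal_re]
  have him : z.im = -(Real.sin θ * t) := by
    simp [hz, hexp, Complex.sub_im, Complex.add_im, Complex.mul_im,
      Complex.cos_ofReal_re, Complex.sin_ofReal_re]
  have hrepos : 0 < z.re := by rw [hre]; nlinarith
  have himneg : z.im < 0 := by rw [him]; nlinarith
  have hzabs : t < ‖z‖ := by
    have h2 : t ^ 2 < ‖z‖ ^ 2 := by
      rw [Complex.sq_norm, Complex.normSq_apply, hre, him]
      nlinarith [Real.sin_sq_add_cos_sq θ]
    exact lt_of_pow_lt_pow_left₀ 2 (norm_nonneg z) h2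
  have habspos : 0 < ‖z‖ := lt_trans ht hzabs
  have hargneg : Complex.arg z < 0 := Complex.arg_neg_iff.2 himneg
  -- arg z > θ - π
  have hlow : θ - Real.pi < Complex.arg z := by
    rw [Complex.arg_of_re_nonneg hrepos.le]
    have h1 : Real.arcsin (-Real.sin θ) = θ - Real.pi := by
      rw [← Real.sin_sub_pi θ]
      exact Real.arcsin_sin (by linarith) (by linarith)
    rw [← h1]
    apply Real.strictMonoOn_arcsin
    · constructor
      · nlinarith [Real.neg_one_le_sin θ, Real.sin_le_one θ]
      · nlinarith [Real.neg_one_le_sin θ, Real.sin_le_one θ]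
    · have him' := abs_le.1 (Complex.abs_im_le_norm z)
      constructor
      · rw [le_div_iff₀ habspos]; nlinarith [him'.1]
      · rw [div_le_one habspos]; exact him'.2
    · -- -sin θ < z.im / abs z
      rw [him, lt_div_iff₀ habspos]
      nlinarith
  have hupp : (p - 1) * Complex.arg z < 0 :=
    mul_neg_of_pos_of_neg hp1 hargneg
  have hlow2 : -Real.pi < (p - 1) * Complex.arg z := by
    have h := (mul_lt_mul_iff_right₀ hp1).2 hlow
    have heq : (p - 1) * (θ - Real.pi) = -θ := by nlinarith [hθeq]
    rw [heq] at h
    linarith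
  exact Real.sin_neg_of_neg_of_neg_pi_lt hupp hlow2
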